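/- Let α > 0, β > 0, C > 0 and set T = 2C·(1/α + 1/β). Define Ã₁ : [0, T] → ℝ by Ã₁(t) = α·t for t ∈ [0, 2C/α) and Ã₁(t) = 4C√β · f(2C, 0, t − 2C/α) for t ∈ [2C/α, T]. Then (1/T)·∫₀ᵀ Ã₁(u) du = (β/(α+β))·C + (αβ/(2C(α+β)))·log( 1 + (2√(2π)/√β)·C·e^{C²/(2β)}·Erf(C/√(2β)) ). -/

import Mathlib

/-- The error function `Erf x = (2/√π)·∫₀ˣ e^{−u²} du`. -/
noncomputable def Erf (x : ℝ) : ℝ :=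
  (2 / Real.sqrt Real.pi) * ∫ u in (0:ℝ)..x, Real.exp (-u ^ 2)

/-- `f(a,b,t)` from the SQF limit-cycle analysis (for parameters `β`, `C`). -/
noncomputable def f (β C a b t : ℝ) : ℝ :=
  Real.exp (-(t / 2) * (2 * b - 2 * C + β * t)) /
    (2 * Real.sqrt β +
      a * Real.exp ((b - C) ^ 2 / (2 * β)) * Real.sqrt (2 * Real.pi) *
        (Erf ((b - C + β * t) / Real.sqrt (2 * β)) -
         Erf ((b - C) / Real.sqrt (2 * β))))

lemma erf_hasDerivAt (x : ℝ) :
    HasDerivAt Erf (2 / Real.sqrt Real.pi * Real.exp (-x ^ 2)) x := by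
  have hc : Continuous fun u : ℝ => Real.exp (-u ^ 2) := by
    continuity
  have h := (hc.integral_hasStrictDerivAt 0 x).hasDerivAt
  exact (h.const_mul (2 / Real.sqrt Real.pi))

lemma erf_continuous : Continuous Erf :=
  continuous_iff_continuousAt.2 fun x => (erf_hasDerivAt x).continuousAt

lemma erf_mono {x y : ℝ} (h : y ≤ x) : Erf y ≤ Erf x := by
  unfold Erf
  have hc : Continuous fun u : ℝ => Real.exp (-u ^ 2) := by continuity
  have hpi : (0:ℝ) < 2 / Real.sqrt Real.pi := by
    positivity
  refine mul_le_mul_of_nonneg_left ?_ hpi.le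
  have := intervalIntegral.integral_interval_sub_left (μ := MeasureTheory.volume)
      (hc.intervalIntegrable 0 x) (hc.intervalIntegrable 0 y)
  have hnn : 0 ≤ ∫ u in y..x, Real.exp (-u ^ 2) :=
    intervalIntegral.integral_nonneg h (fun u _ => (Real.exp_pos _).le)
  linarith [this, hnn]

lemma erf_neg (x : ℝ) : Erf (-x) = -Erf x := by
  unfold Erf
  have : (∫ u in (0:ℝ)..(-x), Real.exp (-u ^ 2))
      = - ∫ u in (0:ℝ)..x, Real.exp (-u ^ 2) := by
    have h := intervalIntegral.integral_comp_neg (a := (0:ℝ)) (b := x)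
      (fun u : ℝ => Real.exp (-u ^ 2))
    simp only [neg_neg, neg_zero, neg_sq] at h
    rw [h, ← intervalIntegral.integral_symm]
  rw [this]; ring

/-- Mean stationary sending rate of flow 1 over the SQF limit cycle of period
`T = 2C(1/α + 1/β)`: the rate is `αt` during the ON phase `[0, 2C/α)` and
`4C√β·f(2C,0,t − 2C/α)` during the loss phase `[2C/α, T]`. -/
theorem sqf_mean_sending_rate (α β C : ℝ) (hα : 0 < α) (hβ : 0 < β) (hC : 0 < C)
    (T : ℝ) (hT : T = 2 * C * (1 / α + 1 / β)) (A₁ : ℝ → ℝ)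
    (hA₁on : ∀ t ∈ Set.Ico (0 : ℝ) (2 * C / α), A₁ t = α * t)
    (hA₁off : ∀ t ∈ Set.Icc (2 * C / α) T,
      A₁ t = 4 * C * Real.sqrt β * f β C (2 * C) 0 (t - 2 * C / α)) :
    (1 / T) * ∫ u in (0:ℝ)..T, A₁ u =
      (β / (α + β)) * C +
        (α * β / (2 * C * (α + β))) *
          Real.log (1 + (2 * Real.sqrt (2 * Real.pi) / Real.sqrt β) * C *
            Real.exp (C ^ 2 / (2 * β)) * Erf (C / Real.sqrt (2 * β))) := by
  set a : ℝ := 2 * C / α with ha_def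
  set d : ℝ := 2 * C / β with hd_def
  have ha : 0 < a := by positivity
  have hd : 0 < d := by positivity
  have hTad : T = a + d := by
    rw [hT, ha_def, hd_def]; field_simp
  have haT : a ≤ T := by rw [hTad]; linarith
  set c : ℝ := Real.sqrt (2 * β) with hc_def
  have hc : 0 < c := Real.sqrt_pos.2 (by linarith)
  have hc2 : c ^ 2 = 2 * β := Real.sq_sqrt (by linarith)
  have hsb : 0 < Real.sqrt β := Real.sqrt_pos.2 hβ
  have hbb : Real.sqrt β * Real.sqrt β = β := Real.mul_self_sqrt hβ.le
  set K : ℝ := 2 * C * Real.exp (C ^ 2 / (2 * β)) * Real.sqrt (2 * Real.pi) with hK_def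
  have hK : 0 < K := by
    have : 0 < Real.sqrt (2 * Real.pi) := Real.sqrt_pos.2 (by positivity)
    positivity
  set g : ℝ → ℝ :=
    fun s => 2 * Real.sqrt β + K * (Erf ((β * s - C) / c) - Erf (-C / c)) with hg_def
  -- rewrite f in terms of g
  have hf : ∀ s : ℝ, f β C (2 * C) 0 s
      = Real.exp (-(s / 2) * (β * s - 2 * C)) / g s := by
    intro s
    unfold f
    have e3 : -(s / 2) * (2 * (0:ℝ) - 2 * C + β * s) = -(s / 2) * (β * s - 2 * C) := by ring
    have e1 : (0:ℝ) - C + β * s = β * s - C := by ring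
    have e4 : ((0:ℝ) - C) ^ 2 = C ^ 2 := by ring
    have e2 : ((0:ℝ) - C) = -C := by ring
    rw [e3, e1, e4, e2, ← hc_def, ← hK_def, hg_def]
  -- derivative of g
  have hgd : ∀ s : ℝ, HasDerivAt g
      (4 * C * Real.sqrt β * Real.exp (-(s / 2) * (β * s - 2 * C))) s := by
    intro s
    have hinner : HasDerivAt (fun u : ℝ => (β * u - C) / c) (β / c) s := by
      simpa using (((hasDerivAt_id s).const_mul β).sub_const C).div_const c
    have herf := (erf_hasDerivAt ((β * s - C) / c)).comp s hinner
    have hgd' : HasDerivAt g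
        (K * (2 / Real.sqrt Real.pi * Real.exp (-((β * s - C) / c) ^ 2) * (β / c))) s := by
      exact ((herf.sub_const _).const_mul K).const_add _
    convert hgd' using 1
    -- scalar identity
    have hx2 : ((β * s - C) / c) ^ 2 = (β * s - C) ^ 2 / (2 * β) := by
      rw [div_pow, hc2]
    have hearg : -(s / 2) * (β * s - 2 * C)
        = C ^ 2 / (2 * β) + -((β * s - C) ^ 2 / (2 * β)) := by
      field_simp; ring
    rw [hx2, hearg, Real.exp_add, hK_def, hc_def]
    have h2pi : Real.sqrt (2 * Real.pi) = Real.sqrt 2 * Real.sqrt Real.pi :=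
      Real.sqrt_mul (by norm_num) _
    have h2b : Real.sqrt (2 * β) = Real.sqrt 2 * Real.sqrt β :=
      Real.sqrt_mul (by norm_num) _
    have hspi : (0:ℝ) < Real.sqrt Real.pi := Real.sqrt_pos.2 Real.pi_pos
    have hs2 : (0:ℝ) < Real.sqrt 2 := Real.sqrt_pos.2 (by norm_num)
    have h22 : Real.sqrt 2 * Real.sqrt 2 = 2 := Real.mul_self_sqrt (by norm_num)
    rw [h2pi, h2b]
    field_simp
    linear_combination 4 * hbb
  -- positivity of g on [0, d]
  have hgpos : ∀ s ∈ Set.Icc (0:ℝ) d, 0 < g s := by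
    intro s hs
    have hmono : Erf (-C / c) ≤ Erf ((β * s - C) / c) := by
      apply erf_mono
      have : 0 ≤ β * s := mul_nonneg hβ.le hs.1
      apply div_le_div_of_nonneg_right ?_ hc.le
      · linarith
    have : 0 ≤ K * (Erf ((β * s - C) / c) - Erf (-C / c)) :=
      mul_nonneg hK.le (by linarith)
    rw [hg_def]; dsimp only; linarith
  -- FTC on the off phase
  have huIcc : Set.uIcc (0:ℝ) d = Set.Icc 0 d := Set.uIcc_of_le hd.le
  have hlogd : ∀ s ∈ Set.uIcc (0:ℝ) d,
      HasDerivAt (fun u => Real.log (g u))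
        (4 * C * Real.sqrt β * f β C (2 * C) 0 s) s := by
    intro s hs
    rw [huIcc] at hs
    have h := (hgd s).log (ne_of_gt (hgpos s hs))
    rw [hf s, ← mul_div_assoc]
    exact h
  have hcontg : Continuous g := by
    rw [hg_def]
    exact continuous_const.add (continuous_const.mul
      ((erf_continuous.comp (by fun_prop)).sub continuous_const))
  have hFcont : ContinuousOn (fun s => 4 * C * Real.sqrt β * f β C (2 * C) 0 s)
      (Set.uIcc (0:ℝ) d) := by
    have : ContinuousOn
        (fun s => 4 * C * Real.sqrt β * (Real.exp (-(s / 2) * (β * s - 2 * C)) / g s))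
        (Set.uIcc (0:ℝ) d) := by
      apply ContinuousOn.mul continuousOn_const
      apply ContinuousOn.div
      · fun_prop
      · exact hcontg.continuousOn
      · intro s hs; rw [huIcc] at hs; exact ne_of_gt (hgpos s hs)
    exact this.congr (fun s _ => by rw [hf s])
  have hFTC : (∫ s in (0:ℝ)..d, 4 * C * Real.sqrt β * f β C (2 * C) 0 s)
      = Real.log (g d) - Real.log (g 0) :=
    intervalIntegral.integral_eq_sub_of_hasDerivAt hlogd
      (ContinuousOn.intervalIntegrable_of_Icc hd.le (huIcc ▸ hFcont))
  -- endpoint values of g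
  have hg0 : g 0 = 2 * Real.sqrt β := by rw [hg_def]; norm_num
  have hErf0 : Erf 0 = 0 := by unfold Erf; simp
  have hErfCc : 0 ≤ Erf (C / c) := by
    have h := erf_mono (show (0:ℝ) ≤ C / c from by positivity)
    rw [hErf0] at h; exact h
  set X : ℝ := 2 * Real.sqrt (2 * Real.pi) / Real.sqrt β * C *
      Real.exp (C ^ 2 / (2 * β)) * Erf (C / c) with hX_def
  have hX : 0 ≤ X := by
    apply mul_nonneg ?_ hErfCc
    positivity
  have hgd_val : g d = 2 * Real.sqrt β * (1 + X) := by
    rw [hg_def]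
    dsimp only
    have hbd : β * d - C = C := by rw [hd_def]; field_simp; ring
    rw [hbd, neg_div, erf_neg, hX_def, hK_def]
    field_simp
    ring
  have hlogval : Real.log (g d) - Real.log (g 0) = Real.log (1 + X) := by
    rw [hg0, hgd_val, Real.log_mul (by positivity) (by linarith : (0:ℝ) < 1 + X).ne']
    ring
  -- the ON phase integral
  have hae : ∀ᵐ x ∂(MeasureTheory.volume : MeasureTheory.Measure ℝ), x ≠ a := by
    have h : (MeasureTheory.volume : MeasureTheory.Measure ℝ) {a} = 0 :=
      MeasureTheory.measure_singleton a
    rw [MeasureTheory.ae_iff]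
    simpa using h
  have haeon : ∀ᵐ x ∂(MeasureTheory.volume : MeasureTheory.Measure ℝ),
      x ∈ Set.uIoc (0:ℝ) a → A₁ x = α * x := by
    filter_upwards [hae] with x hx hxI
    rw [Set.uIoc_of_le ha.le] at hxI
    exact hA₁on x ⟨hxI.1.le, lt_of_le_of_ne hxI.2 hx⟩
  have hI1val : ∫ u in (0:ℝ)..a, A₁ u = 2 * C ^ 2 / α := by
    rw [intervalIntegral.integral_congr_ae haeon]
    rw [intervalIntegral.integral_const_mul, integral_id]
    rw [ha_def]; field_simp; ring
  have hint1 : IntervalIntegrable A₁ MeasureTheory.volume 0 a := by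
    have hcm : IntervalIntegrable (fun x : ℝ => α * x) MeasureTheory.volume 0 a :=
      (continuous_const.mul continuous_id).intervalIntegrable 0 a
    refine hcm.congr_ae ?_
    refine (MeasureTheory.ae_restrict_iff' measurableSet_uIoc).2 ?_
    filter_upwards [haeon] with x hx hxI
    exact (hx hxI).symm
  -- the OFF phase integral
  have heqon : Set.EqOn A₁ (fun t => 4 * C * Real.sqrt β * f β C (2 * C) 0 (t - a))
      (Set.uIcc a T) := by
    intro t ht
    rw [Set.uIcc_of_le haT] at ht
    exact hA₁off t ht
  have hI2val : ∫ u in a..T, A₁ u = Real.log (1 + X) := by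
    rw [intervalIntegral.integral_congr heqon,
      intervalIntegral.integral_comp_sub_right
        (fun s => 4 * C * Real.sqrt β * f β C (2 * C) 0 s) a]
    have h1 : a - a = 0 := by ring
    have h2 : T - a = d := by rw [hTad]; ring
    rw [h1, h2, hFTC, hlogval]
  have hcont2 : ContinuousOn (fun t => 4 * C * Real.sqrt β * f β C (2 * C) 0 (t - a))
      (Set.uIcc a T) := by
    have hmaps : Set.MapsTo (fun t : ℝ => t - a) (Set.uIcc a T) (Set.uIcc 0 d) := ?_
    · exact hFcont.comp ((continuous_id.sub continuous_const).continuousOn) hmaps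
    intro t ht
    rw [Set.uIcc_of_le haT] at ht
    rw [huIcc]
    simp only [Set.mem_Icc, id_eq, Pi.sub_apply]
    have h1 := ht.1
    have h2 := ht.2
    constructor
    · linarith
    · have : T = a + d := hTad
      linarith
  have hint2 : IntervalIntegrable A₁ MeasureTheory.volume a T :=
    (hcont2.congr heqon).intervalIntegrable
  have hsplit := intervalIntegral.integral_add_adjacent_intervals hint1 hint2
  rw [← hsplit, hI1val, hI2val, hT]
  have hαβ : α + β ≠ 0 := by positivity
  field_simp
  ring
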